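/- Let φ(x) = (1/√(2π)) e^{−x²/2} denote the standard normal density. For every t ∈ ℝ and all σ_1, σ_2 > 0, one has |σ_1 · φ(t/σ_1) − σ_2 · φ(t/σ_2)| ≤ √(2/(eπ)) · |σ_1 − σ_2|. -/

import Mathlib

/-- The probability density function of the standard normal distribution. -/
noncomputable def stdNormalPDF (x : ℝ) : ℝ :=
  (Real.sqrt (2 * Real.pi))⁻¹ * Real.exp (-x ^ 2 / 2)

lemma sqrt_const_eq :
    Real.sqrt (2 / (Real.exp 1 * Real.pi)) =
      (Real.sqrt (2 * Real.pi))⁻¹ * (2 * Real.exp (-(1 / 2))) := by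
  have hπ := Real.pi_pos
  have he := Real.exp_pos (1 : ℝ)
  have h : ((Real.sqrt (2 * Real.pi))⁻¹ * (2 * Real.exp (-(1 / 2)))) ^ 2 =
      2 / (Real.exp 1 * Real.pi) := by
    have h2 : Real.exp (-(1 / 2 : ℝ)) ^ 2 = (Real.exp 1)⁻¹ := by
      rw [← Real.exp_nat_mul]
      norm_num [Real.exp_neg]
    rw [mul_pow, mul_pow, inv_pow, Real.sq_sqrt (by positivity), h2]
    field_simp
  rw [← h, Real.sqrt_sq (by positivity)]

lemma key_bound (x : ℝ) :
    stdNormalPDF x * (1 + x ^ 2) ≤ Real.sqrt (2 / (Real.exp 1 * Real.pi)) := by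
  rw [sqrt_const_eq, stdNormalPDF]
  have hc : (0:ℝ) < (Real.sqrt (2 * Real.pi))⁻¹ := by positivity
  rw [mul_assoc]
  refine mul_le_mul_of_nonneg_left ?_ hc.le
  -- show exp(-x²/2) * (1 + x²) ≤ 2 * exp(-1/2)
  have h1 : (x ^ 2 - 1) / 2 + 1 ≤ Real.exp ((x ^ 2 - 1) / 2) := Real.add_one_le_exp _
  have h2 : Real.exp ((x ^ 2 - 1) / 2) = Real.exp (x ^ 2 / 2) * Real.exp (-(1 / 2)) := by
    rw [← Real.exp_add]; ring_nf
  have h3 : Real.exp (-x ^ 2 / 2) * Real.exp (x ^ 2 / 2) = 1 := by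
    rw [← Real.exp_add]; ring_nf; exact Real.exp_zero
  have h4 : (0:ℝ) < Real.exp (-x ^ 2 / 2) := Real.exp_pos _
  nlinarith [Real.exp_pos (x ^ 2 / 2), Real.exp_pos (-(1/2):ℝ)]

lemma hasDeriv (t σ : ℝ) (hσ : 0 < σ) :
    HasDerivAt (fun s => s * stdNormalPDF (t / s))
      (stdNormalPDF (t / σ) * (1 + (t / σ) ^ 2)) σ := by
  have h1 : HasDerivAt (fun s : ℝ => t / s) (t * (-(σ ^ 2)⁻¹)) σ := by
    simpa [div_eq_mul_inv] using (hasDerivAt_inv hσ.ne').const_mul t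
  have h2 := h1.pow 2
  have h3 := ((h2.neg).div_const 2).exp
  have h4 := h3.const_mul (Real.sqrt (2 * Real.pi))⁻¹
  have h5 := (hasDerivAt_id σ).mul h4
  convert h5 using 1
  · rfl
  · rfl
  · rfl
  rw [stdNormalPDF]
  simp only [Pi.neg_apply, Pi.pow_apply, id]
  have hs : σ ≠ 0 := hσ.ne'
  field_simp
  have e3 : σ * (t / σ) = t := by field_simp
  linear_combination (-(2 * t)) * e3

/-- For all `t` and `σ₁, σ₂ > 0`,
`|σ₁ φ(t/σ₁) - σ₂ φ(t/σ₂)| ≤ √(2/(e π)) |σ₁ - σ₂|`. -/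
theorem pdf_scaled_lipschitz (t σ₁ σ₂ : ℝ) (h1 : 0 < σ₁) (h2 : 0 < σ₂) :
    |σ₁ * stdNormalPDF (t / σ₁) - σ₂ * stdNormalPDF (t / σ₂)| ≤
      Real.sqrt (2 / (Real.exp 1 * Real.pi)) * |σ₁ - σ₂| := by
  have := Convex.norm_image_sub_le_of_norm_hasDerivWithin_le
    (f := fun s => s * stdNormalPDF (t / s))
    (f' := fun s => stdNormalPDF (t / s) * (1 + (t / s) ^ 2))
    (C := Real.sqrt (2 / (Real.exp 1 * Real.pi))) (s := Set.Ioi (0:ℝ))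
    (fun x hx => (hasDeriv t x hx).hasDerivWithinAt)
    (fun x hx => by
      have hpos : 0 ≤ stdNormalPDF (t / x) * (1 + (t / x) ^ 2) := by
        unfold stdNormalPDF; positivity
      rw [Real.norm_eq_abs, abs_of_nonneg hpos]
      exact key_bound _)
    (convex_Ioi 0) h2 h1
  simpa [Real.norm_eq_abs] using this
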